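/- arXiv:1101.0033 — 2 statements merged into one kernel-verified Lean document; each statement's English description precedes it below -/
import Mathlib

section
/- Let d, m ≥ 1 be integers and let π be a non-crossing ε_d-partition of [2dm]. Then π has at least dm − 2m blocks of cardinality exactly two, and every block of π has cardinality at most 2m. -/
open Finset

/-- Two elements lie in the same block of the partition `P`. -/
def SameBlock {N : ℕ} (P : Finpartition (univ : Finset (Fin N))) (s t : Fin N) : Prop :=
  ∃ B ∈ P.parts, s ∈ B ∧ t ∈ B

/-- A partition of `[N]` is non-crossing if there are no `s₁ < t₁ < s₂ < t₂` with
`s₁ ∼ s₂`, `t₁ ∼ t₂` but `s₁ ≁ t₁`. -/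
def NonCrossing {N : ℕ} (P : Finpartition (univ : Finset (Fin N))) : Prop :=
  ∀ s₁ t₁ s₂ t₂ : Fin N, s₁ < t₁ → t₁ < s₂ → s₂ < t₂ →
    SameBlock P s₁ s₂ → SameBlock P t₁ t₂ → SameBlock P s₁ t₁

/-- Every block has even cardinality. -/
def EvenPartition {N : ℕ} (P : Finpartition (univ : Finset (Fin N))) : Prop :=
  ∀ B ∈ P.parts, Even B.card

/-- The (two-valued) function `ε` alternates along each block of `P`, listed in
increasing order. -/
def Alternating {N : ℕ} (ε : Fin N → Bool) (P : Finpartition (univ : Finset (Fin N))) : Prop :=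
  ∀ B ∈ P.parts, (Finset.sort B (· ≤ ·)).Chain' (fun a b => ε a ≠ ε b)

/-- An `ε`-partition: an even partition on each block of which `ε` alternates. -/
def EpsPartition {N : ℕ} (ε : Fin N → Bool) (P : Finpartition (univ : Finset (Fin N))) : Prop :=
  EvenPartition P ∧ Alternating ε P

/-- A pairing: every block has exactly two elements. -/
def IsPairing {N : ℕ} (P : Finpartition (univ : Finset (Fin N))) : Prop :=
  ∀ B ∈ P.parts, B.card = 2

/-- `σ` refines `π`: every block of `σ` is contained in a block of `π` (i.e. `σ ≤ π`). -/
def Refines {N : ℕ} (σ π : Finpartition (univ : Finset (Fin N))) : Prop :=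
  ∀ B ∈ σ.parts, ∃ C ∈ π.parts, B ⊆ C

/-- The pattern `ε_d = (1^d ∗^d)^m` on `[2dm]` (0-based; `true` codes `1`, `false` codes `∗`). -/
def epsd (d m : ℕ) : Fin (2*d*m) → Bool := fun j => decide ((j : ℕ) / d % 2 = 0)

/-- `ker I ≥ π` : the function `I` is constant on every block of `π`. -/
def KerGe {N : ℕ} {Λ : Type*} (π : Finpartition (univ : Finset (Fin N))) (I : Fin N → Λ) : Prop :=
  ∀ B ∈ π.parts, ∀ s ∈ B, ∀ t ∈ B, I s = I t

/-- The position `(j-1)d + l` in `[2dm]`, splitting `[2dm]` into `2m` consecutive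
segments of length `d`. -/
def seg (d m : ℕ) (j : Fin (2*m)) (l : Fin d) : Fin (2*d*m) :=
  ⟨j.1 * d + l.1, by
    have hj : j.1 + 1 ≤ 2*m := j.2
    have hl : l.1 < d := l.2
    calc j.1 * d + l.1 < j.1 * d + d := by linarith
      _ = (j.1 + 1) * d := by ring
      _ ≤ (2*m) * d := Nat.mul_le_mul hj le_rfl
      _ = 2*d*m := by ring⟩

section AscL

variable {α : Type*}

/-- Count of adjacent (`false`,`true`) transitions of `ε` along a list. -/
def ascL (ε : α → Bool) : List α → ℕ
  | [] => 0
  | [_] => 0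
  | a :: b :: t => (if ε a = false ∧ ε b = true then 1 else 0) + ascL ε (b :: t)

@[simp] lemma ascL_nil (ε : α → Bool) : ascL ε [] = 0 := rfl
@[simp] lemma ascL_single (ε : α → Bool) (a : α) : ascL ε [a] = 0 := rfl
lemma ascL_cons_cons (ε : α → Bool) (a b : α) (t : List α) :
    ascL ε (a :: b :: t) = (if ε a = false ∧ ε b = true then 1 else 0) + ascL ε (b :: t) := rfl

lemma ascL_short (ε : α → Bool) (l : List α) (h : l.length ≤ 2) : ascL ε l ≤ 1 := by
  match l with
  | [] => simp
  | [a] => simp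
  | [a, b] =>
    rw [ascL_cons_cons]; split <;> simp
  | a :: b :: c :: t => simp at h

/-- The glue term for appending two lists. -/
def glue (ε : α → Bool) (xs ys : List α) : ℕ :=
  ascL ε (xs.getLast?.toList ++ ys.head?.toList)

lemma glue_le_one (ε : α → Bool) (xs ys : List α) : glue ε xs ys ≤ 1 := by
  apply ascL_short
  have h1 : xs.getLast?.toList.length ≤ 1 := by cases xs.getLast? <;> simp
  have h2 : ys.head?.toList.length ≤ 1 := by cases ys.head? <;> simp
  simp only [List.length_append]; omega

lemma ascL_append (ε : α → Bool) : ∀ xs ys : List α,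
    ascL ε (xs ++ ys) = ascL ε xs + ascL ε ys + glue ε xs ys
  | [], ys => by
    simp only [List.nil_append, ascL_nil, glue]
    cases ys <;> simp
  | [a], ys => by
    cases ys with
    | nil => simp [glue]
    | cons b t =>
      simp only [List.cons_append, List.nil_append, ascL_cons_cons, glue]
      simp [ascL_cons_cons]
      omega
  | a :: b :: t, ys => by
    have ih := ascL_append ε (b :: t) ys
    simp only [List.cons_append] at ih ⊢
    rw [ascL_cons_cons, ascL_cons_cons, ih]
    have : glue ε (a :: b :: t) ys = glue ε (b :: t) ys := by
      simp [glue, List.getLast?_cons_cons]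
    rw [this]
    omega

lemma alt_len (ε : α → Bool) : ∀ l : List α, l.Chain' (fun a b => ε a ≠ ε b) →
    l.length ≤ 2 * ascL ε l + 2 ∧
      (∀ a, l.head? = some a → ε a = false → l.length ≤ 2 * ascL ε l + 1) := by
  intro l
  induction l with
  | nil => intro _; simp
  | cons a t ih =>
    intro hc
    cases t with
    | nil => simp
    | cons b t' =>
      simp only [List.Chain', List.isChain_cons_cons] at hc
      obtain ⟨hab, hc'⟩ := hc
      obtain ⟨H1, H2⟩ := ih hc'
      rw [ascL_cons_cons]
      cases hεa : ε a with
      | false =>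
        have hεb : ε b = true := by
          cases hεb : ε b
          · exact absurd (hεa.trans hεb.symm) hab
          · rfl
        have hstep : (if (false:Bool) = false ∧ ε b = true then 1 else 0) = 1 := by
          simp [hεb]
        rw [hstep]
        constructor
        · simp only [List.length_cons] at H1 ⊢; omega
        · intro x hx _
          simp only [List.head?_cons, Option.some.injEq] at hx
          simp only [List.length_cons] at H1 ⊢; omega
      | true =>
        have hεb : ε b = false := by
          cases hεb : ε b
          · rfl
          · exact absurd (hεa.trans hεb.symm) hab
        have hstep : (if (true:Bool) = false ∧ ε b = true then 1 else 0) = 0 := by simp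
        rw [hstep]
        have := H2 b rfl hεb
        constructor
        · simp only [List.length_cons] at this ⊢; omega
        · intro x hx hεx
          simp only [List.head?_cons, Option.some.injEq] at hx
          rw [← hx] at hεx
          rw [hεa] at hεx; exact absurd hεx (by simp)

lemma glue_mono {ε : α → Bool} (xs ys zs : List α) {b : α}
    (hb : ys.head? = some b) (hεb : ε b = true) : glue ε xs zs ≤ glue ε xs ys := by
  unfold glue
  cases hxs : xs.getLast? with
  | none =>
    have : ascL ε (Option.toList none ++ zs.head?.toList) = 0 := by
      cases zs.head? <;> simp
    rw [this]; exact Nat.zero_le _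
  | some a =>
    rw [hb]
    cases hzs : zs.head? with
    | none => simp
    | some c =>
      simp only [Option.toList_some, List.cons_append, List.nil_append]
      rw [ascL_cons_cons, ascL_cons_cons]
      simp only [ascL_single]
      by_cases hεa : ε a = false
      · simp [hεa, hεb]
        split <;> omega
      · have : ε a = true := by revert hεa; cases ε a <;> simp
        simp [this]

/-- Key inequality: inserting an even alternating list `M` between `A` and `C`
increases the ascent count by at least `M.length/2 - 1`. -/
lemma key_ineq (ε : α → Bool) (A M C : List α)
    (hM : M.Chain' (fun a b => ε a ≠ ε b)) (hev : Even M.length) :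
    M.length + 2 * ascL ε (A ++ C) ≤ 2 + 2 * ascL ε (A ++ (M ++ C)) := by
  cases M with
  | nil => simp
  | cons m0 M' =>
    set M := m0 :: M' with hMdef
    have e1 : ascL ε (A ++ (M ++ C)) = ascL ε A + (ascL ε M + ascL ε C + glue ε M C) + glue ε A (M ++ C) := by
      rw [ascL_append, ascL_append]
    have e2 : glue ε A (M ++ C) = glue ε A M := by
      simp [glue, hMdef]
    have e3 : ascL ε (A ++ C) = ascL ε A + ascL ε C + glue ε A C := ascL_append ε A C
    obtain ⟨k, hk⟩ := hev
    have hlen := (alt_len ε M hM).1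
    cases hεm : ε m0 with
    | false =>
      have h2 := (alt_len ε M hM).2 m0 rfl hεm
      have hg : glue ε A C ≤ 1 := glue_le_one ε A C
      rw [e1, e2, e3]
      omega
    | true =>
      have hg : glue ε A C ≤ glue ε A M := glue_mono A M C (b := m0) rfl hεm
      rw [e1, e2, e3]
      omega

end AscL
section FinsetPart
variable [LinearOrder α]

/-- Same block relation for a family of blocks. -/
def SBl (P : Finset (Finset α)) (s t : α) : Prop := ∃ B ∈ P, s ∈ B ∧ t ∈ B

lemma block_unique {P : Finset (Finset α)}
    (hdisj : ∀ B ∈ P, ∀ B' ∈ P, B ≠ B' → Disjoint B B')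
    {B B' : Finset α} (hB : B ∈ P) (hB' : B' ∈ P) {z : α} (hz : z ∈ B) (hz' : z ∈ B') :
    B = B' := by
  by_contra hne
  exact Finset.disjoint_left.mp (hdisj B hB B' hB' hne) hz hz'

lemma sort_union_of_le (A B : Finset α) (hd : Disjoint A B)
    (hlt : ∀ a ∈ A, ∀ b ∈ B, a ≤ b) :
    (A.disjUnion B hd).sort (· ≤ ·) = A.sort (· ≤ ·) ++ B.sort (· ≤ ·) := by
  apply fun hp hs => List.Perm.eq_of_pairwise' (Finset.pairwise_sort _ _) hs hp
  · rw [← Multiset.coe_eq_coe]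
    rw [← Multiset.coe_add, Finset.sort_eq, Finset.sort_eq, Finset.sort_eq]
    rfl
  · rw [List.pairwise_append]
    exact ⟨Finset.pairwise_sort _ _, Finset.pairwise_sort _ _,
      fun a ha b hb => hlt a (Finset.mem_sort _ |>.mp ha) b (Finset.mem_sort _ |>.mp hb)⟩

lemma exists_interval_block (P : Finset (Finset α)) (S : Finset α) (hPne : P.Nonempty)
    (hcov : ∀ x, x ∈ S ↔ ∃ B ∈ P, x ∈ B)
    (hdisj : ∀ B ∈ P, ∀ B' ∈ P, B ≠ B' → Disjoint B B')
    (hNC : ∀ s₁ t₁ s₂ t₂ : α, s₁ < t₁ → t₁ < s₂ → s₂ < t₂ →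
      SBl P s₁ s₂ → SBl P t₁ t₂ → SBl P s₁ t₁) :
    ∃ I ∈ P, ∀ x ∈ S, (∃ a ∈ I, a ≤ x) → (∃ b ∈ I, x ≤ b) → x ∈ I := by
  obtain ⟨I, hIP, hmin⟩ := P.exists_min_image
    (fun B => (S.filter (fun x => (∃ a ∈ B, a ≤ x) ∧ (∃ b ∈ B, x ≤ b))).card) hPne
  refine ⟨I, hIP, ?_⟩
  rintro x hxS ⟨a, haI, hax⟩ ⟨b, hbI, hxb⟩
  by_contra hxI
  have hne : I.Nonempty := ⟨a, haI⟩
  set mi := I.min' hne with hmi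
  set ma := I.max' hne with hma
  have hmiI : mi ∈ I := I.min'_mem hne
  have hmaI : ma ∈ I := I.max'_mem hne
  have hmix : mi ≤ x := le_trans (I.min'_le a haI) hax
  have hxma : x ≤ ma := le_trans hxb (I.le_max' b hbI)
  have hmilt : mi < x := lt_of_le_of_ne hmix (fun h => hxI (h ▸ hmiI))
  have hltma : x < ma := lt_of_le_of_ne hxma (fun h => hxI (h.symm ▸ hmaI))
  obtain ⟨B', hB'P, hxB'⟩ := (hcov x).mp hxS
  have hB'I : B' ≠ I := fun h => hxI (h ▸ hxB')
  by_cases hcase : ∀ y ∈ B', mi < y ∧ y < ma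
  · -- B' strictly inside the span of I : contradicts minimality
    have hsub : S.filter (fun z => (∃ a ∈ B', a ≤ z) ∧ (∃ b ∈ B', z ≤ b)) ⊂
        S.filter (fun z => (∃ a ∈ I, a ≤ z) ∧ (∃ b ∈ I, z ≤ b)) := by
      constructor
      · intro z hz
        rw [Finset.mem_filter] at hz ⊢
        obtain ⟨hzS, ⟨a', ha', haz⟩, ⟨b', hb', hzb⟩⟩ := hz
        exact ⟨hzS, ⟨mi, hmiI, le_trans (le_of_lt (hcase a' ha').1) haz⟩,
          ⟨ma, hmaI, le_trans hzb (le_of_lt (hcase b' hb').2)⟩⟩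
      · intro hsub'
        have hmiin : mi ∈ S.filter (fun z => (∃ a ∈ I, a ≤ z) ∧ (∃ b ∈ I, z ≤ b)) := by
          rw [Finset.mem_filter]
          exact ⟨(hcov mi).mpr ⟨I, hIP, hmiI⟩, ⟨mi, hmiI, le_refl _⟩,
            ⟨ma, hmaI, I.min'_le ma hmaI⟩⟩
        have := hsub' hmiin
        rw [Finset.mem_filter] at this
        obtain ⟨_, ⟨a', ha', ha'mi⟩, _⟩ := this
        exact absurd ha'mi (not_le.mpr (hcase a' ha').1)
    exact absurd (hmin B' hB'P) (not_le.mpr (Finset.card_lt_card hsub))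
  · push_neg at hcase
    obtain ⟨y, hyB', hy⟩ := hcase
    have hyI : y ∉ I := by
      intro hyI
      exact hB'I (block_unique hdisj hB'P hIP hyB' hyI)
    rcases lt_or_ge y mi with hylt | hyge
    · -- y < mi < x < ma
      obtain ⟨B'', hB''P, hyB'', hmiB''⟩ := hNC y mi x ma hylt hmilt hltma
        ⟨B', hB'P, hyB', hxB'⟩ ⟨I, hIP, hmiI, hmaI⟩
      have h1 : B'' = B' := block_unique hdisj hB''P hB'P hyB'' hyB'
      have h2 : B'' = I := block_unique hdisj hB''P hIP hmiB'' hmiI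
      exact hB'I (h1 ▸ h2)
    · have hmiy : mi < y := lt_of_le_of_ne hyge (fun h => hyI (h ▸ hmiI))
      have hyma : ma < y := lt_of_le_of_ne (hy hmiy) (fun h => hyI (h ▸ hmaI))
      obtain ⟨B'', hB''P, hmiB'', hxB''⟩ := hNC mi x ma y hmilt hltma hyma
        ⟨I, hIP, hmiI, hmaI⟩ ⟨B', hB'P, hxB', hyB'⟩
      have h2 : B'' = I := block_unique hdisj hB''P hIP hmiB'' hmiI
      exact hxI (h2 ▸ hxB'')


/-- Main induction: the total excess of block sizes over 2 is bounded by twice the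
number of ascending transitions along the sorted ground set. -/
lemma main_bound (ε : α → Bool) : ∀ (n : ℕ) (P : Finset (Finset α)) (S : Finset α),
    P.card = n →
    (∀ B ∈ P, B.Nonempty) →
    (∀ B ∈ P, Even B.card) →
    (∀ B ∈ P, ∀ B' ∈ P, B ≠ B' → Disjoint B B') →
    (∀ x, x ∈ S ↔ ∃ B ∈ P, x ∈ B) →
    (∀ s₁ t₁ s₂ t₂ : α, s₁ < t₁ → t₁ < s₂ → s₂ < t₂ →
      SBl P s₁ s₂ → SBl P t₁ t₂ → SBl P s₁ t₁) →
    (∀ B ∈ P, (B.sort (· ≤ ·)).Chain' fun a b => ε a ≠ ε b) →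
    ∑ B ∈ P, (B.card - 2) ≤ 2 * ascL ε (S.sort (· ≤ ·)) := by
  intro n
  induction n with
  | zero =>
    intro P S hcard _ _ _ _ _ _
    rw [Finset.card_eq_zero.mp hcard]
    simp
  | succ n ih =>
    intro P S hcard hne hev hdisj hcov hNC hAlt
    have hPne : P.Nonempty := Finset.card_pos.mp (by omega)
    obtain ⟨I, hIP, hInt⟩ := exists_interval_block P S hPne hcov hdisj hNC
    have hIne : I.Nonempty := hne I hIP
    set mi := I.min' hIne with hmi
    set ma := I.max' hIne with hma
    have hmiI := I.min'_mem hIne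
    have hmaI := I.max'_mem hIne
    have hIsubS : ∀ z ∈ I, z ∈ S := fun z hz => (hcov z).mpr ⟨I, hIP, hz⟩
    set A := S.filter (fun z => z < mi) with hA
    set C := S.filter (fun z => ma < z) with hC
    -- basic order facts
    have hAI : Disjoint A I := by
      rw [Finset.disjoint_left]
      intro z hz hzI
      exact absurd (I.min'_le z hzI) (not_le.mpr (Finset.mem_filter.mp hz).2)
    have hIC : Disjoint I C := by
      rw [Finset.disjoint_right]
      intro z hz hzI
      exact absurd (I.le_max' z hzI) (not_le.mpr (Finset.mem_filter.mp hz).2)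
    have hAle : ∀ a ∈ A, ∀ i ∈ I, a ≤ i := fun a ha i hi =>
      le_of_lt (lt_of_lt_of_le (Finset.mem_filter.mp ha).2 (I.min'_le i hi))
    have hCge : ∀ i ∈ I, ∀ c ∈ C, i ≤ c := fun i hi c hc =>
      le_of_lt (lt_of_le_of_lt (I.le_max' i hi) (Finset.mem_filter.mp hc).2)
    have hAIC : Disjoint (A.disjUnion I hAI) C := by
      rw [Finset.disjoint_left]
      intro z hz hzC
      rw [Finset.mem_disjUnion] at hz
      have hmaz : ma < z := (Finset.mem_filter.mp hzC).2
      rcases hz with hz | hz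
      · have := (Finset.mem_filter.mp hz).2
        exact absurd (lt_trans this (lt_of_le_of_lt (I.min'_le ma hmaI) hmaz)) (lt_irrefl z)
      · exact absurd (lt_of_le_of_lt (I.le_max' z hz) hmaz) (lt_irrefl z)
    have hACdisj : Disjoint A C := by
      rw [Finset.disjoint_left]
      intro z hz hzC
      have h1 := (Finset.mem_filter.mp hz).2
      have h2 := (Finset.mem_filter.mp hzC).2
      exact absurd (lt_trans h1 (lt_of_le_of_lt (I.min'_le ma hmaI) h2)) (lt_irrefl z)
    -- the ground set splits
    have hSsplit : S = (A.disjUnion I hAI).disjUnion C hAIC := by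
      apply Finset.ext
      intro z
      rw [Finset.mem_disjUnion, Finset.mem_disjUnion]
      constructor
      · intro hzS
        rcases lt_or_ge z mi with h | h
        · exact Or.inl (Or.inl (Finset.mem_filter.mpr ⟨hzS, h⟩))
        · rcases le_or_gt z ma with h' | h'
          · exact Or.inl (Or.inr (hInt z hzS ⟨mi, hmiI, h⟩ ⟨ma, hmaI, h'⟩))
          · exact Or.inr (Finset.mem_filter.mpr ⟨hzS, h'⟩)
      · rintro ((hz | hz) | hz)
        · exact (Finset.mem_filter.mp hz).1
        · exact hIsubS z hz
        · exact (Finset.mem_filter.mp hz).1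
    have hS'split : S \ I = A.disjUnion C hACdisj := by
      apply Finset.ext
      intro z
      rw [Finset.mem_sdiff, Finset.mem_disjUnion]
      constructor
      · rintro ⟨hzS, hzI⟩
        rcases lt_or_ge z mi with h | h
        · exact Or.inl (Finset.mem_filter.mpr ⟨hzS, h⟩)
        · rcases le_or_gt z ma with h' | h'
          · exact absurd (hInt z hzS ⟨mi, hmiI, h⟩ ⟨ma, hmaI, h'⟩) hzI
          · exact Or.inr (Finset.mem_filter.mpr ⟨hzS, h'⟩)
      · rintro (hz | hz)
        · refine ⟨(Finset.mem_filter.mp hz).1, fun hzI => ?_⟩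
          exact absurd (I.min'_le z hzI) (not_le.mpr (Finset.mem_filter.mp hz).2)
        · refine ⟨(Finset.mem_filter.mp hz).1, fun hzI => ?_⟩
          exact absurd (I.le_max' z hzI) (not_le.mpr (Finset.mem_filter.mp hz).2)
    -- sorted lists split
    have hsortS : S.sort (· ≤ ·) = A.sort (· ≤ ·) ++ (I.sort (· ≤ ·) ++ C.sort (· ≤ ·)) := by
      rw [hSsplit, sort_union_of_le _ _ hAIC, sort_union_of_le _ _ hAI hAle, List.append_assoc]
      intro z hz c hc
      rw [Finset.mem_disjUnion] at hz
      rcases hz with hz | hz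
      · exact le_trans (hAle z hz mi hmiI) (hCge mi hmiI c hc)
      · exact hCge z hz c hc
    have hsortS' : (S \ I).sort (· ≤ ·) = A.sort (· ≤ ·) ++ C.sort (· ≤ ·) := by
      rw [hS'split, sort_union_of_le _ _ hACdisj]
      intro a ha c hc
      exact le_trans (hAle a ha mi hmiI) (hCge mi hmiI c hc)
    -- apply key inequality
    have hkey : I.card + 2 * ascL ε ((S \ I).sort (· ≤ ·)) ≤
        2 + 2 * ascL ε (S.sort (· ≤ ·)) := by
      rw [hsortS, hsortS']
      have := key_ineq ε (A.sort (· ≤ ·)) (I.sort (· ≤ ·)) (C.sort (· ≤ ·))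
        (hAlt I hIP) (by rw [Finset.length_sort]; exact hev I hIP)
      rwa [Finset.length_sort] at this
    -- apply induction hypothesis to P.erase I
    have hcov' : ∀ x, x ∈ S \ I ↔ ∃ B ∈ P.erase I, x ∈ B := by
      intro x
      rw [Finset.mem_sdiff]
      constructor
      · rintro ⟨hxS, hxI⟩
        obtain ⟨B, hBP, hxB⟩ := (hcov x).mp hxS
        refine ⟨B, Finset.mem_erase.mpr ⟨fun h => hxI (h ▸ hxB), hBP⟩, hxB⟩
      · rintro ⟨B, hBe, hxB⟩
        obtain ⟨hBne, hBP⟩ := Finset.mem_erase.mp hBe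
        refine ⟨(hcov x).mpr ⟨B, hBP, hxB⟩, fun hxI => ?_⟩
        exact hBne (block_unique hdisj hBP hIP hxB hxI)
    have hNC' : ∀ s₁ t₁ s₂ t₂ : α, s₁ < t₁ → t₁ < s₂ → s₂ < t₂ →
        SBl (P.erase I) s₁ s₂ → SBl (P.erase I) t₁ t₂ → SBl (P.erase I) s₁ t₁ := by
      intro s₁ t₁ s₂ t₂ h1 h2 h3 hs ht
      obtain ⟨B₁, hB₁e, hs₁, hs₂⟩ := hs
      obtain ⟨B₂, hB₂e, ht₁, ht₂⟩ := ht
      obtain ⟨B, hBP, hs₁', ht₁'⟩ := hNC s₁ t₁ s₂ t₂ h1 h2 h3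
        ⟨B₁, Finset.mem_of_mem_erase hB₁e, hs₁, hs₂⟩
        ⟨B₂, Finset.mem_of_mem_erase hB₂e, ht₁, ht₂⟩
      have : B = B₁ := block_unique hdisj hBP (Finset.mem_of_mem_erase hB₁e) hs₁' hs₁
      exact ⟨B, this ▸ hB₁e, hs₁', ht₁'⟩
    have hih := ih (P.erase I) (S \ I)
      (by rw [Finset.card_erase_of_mem hIP, hcard]; omega)
      (fun B hB => hne B (Finset.mem_of_mem_erase hB))
      (fun B hB => hev B (Finset.mem_of_mem_erase hB))
      (fun B hB B' hB' hBB' => hdisj B (Finset.mem_of_mem_erase hB) B'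
        (Finset.mem_of_mem_erase hB') hBB')
      hcov' hNC'
      (fun B hB => hAlt B (Finset.mem_of_mem_erase hB))
    -- assemble
    have hsum : ∑ B ∈ P.erase I, (B.card - 2) + (I.card - 2) = ∑ B ∈ P, (B.card - 2) :=
      Finset.sum_erase_add P _ hIP
    have hI2 : 2 ≤ I.card := by
      obtain ⟨k, hk⟩ := hev I hIP
      have := Finset.card_pos.mpr hIne
      omega
    omega

end FinsetPart



lemma ascL_map {β : Type*} (ε : β → Bool) (g : α → β) : ∀ l : List α,
    ascL ε (l.map g) = ascL (fun x => ε (g x)) l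
  | [] => rfl
  | [_] => rfl
  | a :: b :: t => by
    rw [List.map_cons, List.map_cons, ascL_cons_cons, ← List.map_cons,
      ascL_map ε g (b :: t), ascL_cons_cons]

lemma ascL_range (f : ℕ → Bool) : ∀ n : ℕ, ascL f (List.range (n+1)) =
    ((Finset.range n).filter (fun p => f p = false ∧ f (p+1) = true)).card
  | 0 => by
    rw [List.range_succ]
    simp [ascL]
  | (n+1) => by
    have h1 : List.range (n+2) = List.range (n+1) ++ [n+1] := List.range_succ (n := n+1)
    have h2 : (List.range (n+1)).getLast? = some n := by
      rw [List.range_succ]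
      exact List.getLast?_concat
    have h5 : ascL f [n+1] = 0 := rfl
    rw [h1, ascL_append, ascL_range f n, h5]
    have h3 : glue f (List.range (n+1)) [n+1] =
        if f n = false ∧ f (n+1) = true then 1 else 0 := by
      unfold glue
      rw [h2]
      simp [ascL_cons_cons, h5]
    have h4 : (Finset.range (n+1)).filter (fun p => f p = false ∧ f (p+1) = true) =
        if f n = false ∧ f (n+1) = true then
          insert n ((Finset.range n).filter (fun p => f p = false ∧ f (p+1) = true))
        else (Finset.range n).filter (fun p => f p = false ∧ f (p+1) = true) := by
      rw [Finset.range_add_one, Finset.filter_insert]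
    rw [h3, h4]
    split
    · rw [Finset.card_insert_of_notMem (by simp)]
    · rfl

lemma count_bound (d m K : ℕ) (hd : 1 ≤ d) (hK : K + 1 ≤ 2*d*m) :
    ((Finset.range K).filter (fun p =>
      (decide (p / d % 2 = 0)) = false ∧ (decide ((p+1) / d % 2 = 0)) = true)).card ≤ m - 1 := by
  have hstruct : ∀ p ∈ (Finset.range K).filter (fun p =>
      (decide (p / d % 2 = 0)) = false ∧ (decide ((p+1) / d % 2 = 0)) = true),
      ∃ j, 1 ≤ j ∧ j < m ∧ p + 1 = 2*d*j := by
    intro p hp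
    rw [Finset.mem_filter, Finset.mem_range] at hp
    obtain ⟨hpK, hF, hT⟩ := hp
    rw [decide_eq_false_iff_not] at hF
    rw [decide_eq_true_eq] at hT
    have hsucc := Nat.succ_div (a := p) (b := d)
    by_cases hdvd : d ∣ p + 1
    · rw [if_pos hdvd] at hsucc
      obtain ⟨c, hc⟩ := hdvd
      have hcq : (p+1)/d = c := by
        rw [hc]
        exact Nat.mul_div_cancel_left c (by omega)
      rw [hcq] at hsucc hT
      obtain ⟨j, hj⟩ : ∃ j, c = 2*j := ⟨c/2, by omega⟩
      have hp1 : p + 1 = 2*d*j := by rw [hc, hj]; ring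
      have hge1 : 1 ≤ j := by
        rcases Nat.eq_zero_or_pos j with h0 | h1
        · rw [h0] at hp1; omega
        · exact h1
      refine ⟨j, hge1, ?_, hp1⟩
      by_contra hcon
      push_neg at hcon
      have hmj : 2*d*m ≤ 2*d*j := Nat.mul_le_mul_left (2*d) hcon
      omega
    · rw [if_neg hdvd] at hsucc
      rw [hsucc] at hT
      generalize p / d = a at hT hF
      omega
  calc ((Finset.range K).filter _).card ≤ (Finset.Ico 1 m).card := by
        apply Finset.card_le_card_of_injOn (fun p => (p+1)/(2*d))
        · intro p hp
          obtain ⟨j, hj1, hjm, hpj⟩ := hstruct p hp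
          have : (p+1)/(2*d) = j := by
            rw [hpj]
            exact Nat.mul_div_cancel_left j (by omega)
          simp only [Finset.mem_coe, Finset.mem_Ico]
          omega
        · intro p hp p' hp' heq
          obtain ⟨j, hj1, hjm, hpj⟩ := hstruct p hp
          obtain ⟨j', hj1', hjm', hpj'⟩ := hstruct p' hp'
          have e1 : (p+1)/(2*d) = j := by
            rw [hpj]; exact Nat.mul_div_cancel_left j (by omega)
          have e2 : (p'+1)/(2*d) = j' := by
            rw [hpj']; exact Nat.mul_div_cancel_left j' (by omega)
          simp only at heq
          rw [e1, e2] at heq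
          rw [heq] at hpj
          omega
    _ = m - 1 := by rw [Nat.card_Ico]

lemma asc_univ_bound (d m : ℕ) (hd : 1 ≤ d) (hm : 1 ≤ m) :
    ascL (epsd d m) ((univ : Finset (Fin (2*d*m))).sort (· ≤ ·)) ≤ m - 1 := by
  rw [Fin.sort_univ]
  have h2 : ascL (epsd d m) (List.finRange (2*d*m)) =
      ascL (fun p : ℕ => decide (p / d % 2 = 0)) (List.range (2*d*m)) := by
    rw [← (show (List.finRange (2*d*m)).map (fun i : Fin (2*d*m) => (i : ℕ)) = List.range (2*d*m) from
      List.ext_getElem (by simp) (by simp)), ascL_map]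
    rfl
  have hN : 2 ≤ 2*d*m := by
    calc 2 = 2*1*1 := by ring
    _ ≤ 2*d*m := Nat.mul_le_mul (Nat.mul_le_mul (le_refl 2) hd) hm
  have hNeq : 2*d*m = (2*d*m - 1) + 1 := by omega
  rw [h2, hNeq, ascL_range]
  exact count_bound d m (2*d*m - 1) hd (by omega)


/-- block-structure assertion of Proposition 3.5 of the paper:
a non-crossing `ε_d`-partition of `[2dm]` has at least `dm − 2m` blocks of size two,
and all its blocks have size at most `2m`. -/
theorem eps_partition_block_structure (d m : ℕ) (hd : 1 ≤ d) (hm : 1 ≤ m)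
    (π : Finpartition (univ : Finset (Fin (2*d*m))))
    (hNC : NonCrossing π) (hπ : EpsPartition (epsd d m) π) :
    d*m - 2*m ≤ (π.parts.filter fun B => B.card = 2).card ∧
      ∀ B ∈ π.parts, B.card ≤ 2*m := by
  obtain ⟨hEv, hAlt⟩ := hπ
  have hdisj : ∀ B ∈ π.parts, ∀ B' ∈ π.parts, B ≠ B' → Disjoint B B' :=
    fun B hB B' hB' hne => π.disjoint (Finset.mem_coe.mpr hB) (Finset.mem_coe.mpr hB') hne
  have hcov : ∀ x : Fin (2*d*m), x ∈ (univ : Finset (Fin (2*d*m))) ↔ ∃ B ∈ π.parts, x ∈ B := by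
    intro x
    simp only [Finset.mem_univ, true_iff]
    exact π.exists_mem (Finset.mem_univ x)
  have hmain := main_bound (epsd d m) π.parts.card π.parts univ rfl
    (fun B hB => π.nonempty_of_mem_parts hB) hEv hdisj hcov hNC hAlt
  have hasc := asc_univ_bound d m hd hm
  have hT : ∑ B ∈ π.parts, (B.card - 2) ≤ 2*m - 2 := by omega
  have hsumcard : ∑ B ∈ π.parts, B.card = 2*d*m := by
    rw [π.sum_card_parts, Finset.card_univ, Fintype.card_fin]
  have hsize : ∀ B ∈ π.parts, B.card ≤ 2*m := by
    intro B hB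
    have hle : B.card - 2 ≤ ∑ B ∈ π.parts, (B.card - 2) :=
      Finset.single_le_sum (f := fun B => B.card - 2) (fun i _ => Nat.zero_le _) hB
    have h2 : 2 ≤ B.card := by
      obtain ⟨k, hk⟩ := hEv B hB
      have := Finset.card_pos.mpr (π.nonempty_of_mem_parts hB)
      omega
    omega
  refine ⟨?_, hsize⟩
  have hsplit := Finset.sum_filter_add_sum_filter_not π.parts (fun B => B.card = 2)
    (fun B => B.card)
  have h2 : ∑ B ∈ π.parts.filter (fun B => B.card = 2), B.card
      = 2 * (π.parts.filter (fun B => B.card = 2)).card := by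
    rw [Finset.sum_congr rfl (fun B hB => (Finset.mem_filter.mp hB).2), Finset.sum_const,
      smul_eq_mul, mul_comm]
  have h4 : ∑ B ∈ π.parts.filter (fun B => ¬ B.card = 2), B.card
      ≤ 2 * ∑ B ∈ π.parts.filter (fun B => ¬ B.card = 2), (B.card - 2) := by
    rw [Finset.mul_sum]
    apply Finset.sum_le_sum
    intro B hB
    obtain ⟨hBP, hB2⟩ := Finset.mem_filter.mp hB
    obtain ⟨k, hk⟩ := hEv B hBP
    have := Finset.card_pos.mpr (π.nonempty_of_mem_parts hBP)
    omega
  have h5 : ∑ B ∈ π.parts.filter (fun B => ¬ B.card = 2), (B.card - 2)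
      ≤ ∑ B ∈ π.parts, (B.card - 2) :=
    Finset.sum_le_sum_of_subset (Finset.filter_subset _ _)
  have hdm : 2*d*m = 2*(d*m) := by ring
  have hsum2 : ∑ B ∈ π.parts, B.card = 2*(d*m) := hsumcard.trans hdm
  clear hsumcard hdm
  generalize hX : d*m = X at hsum2 ⊢
  omega
end

section
/- Let d, m ≥ 1 and let π be a non-crossing ε_d-partition of [2dm]. Let A ⊆ [2dm] be the union of all two-element blocks of π. Then: (i) for every non-crossing ε_d-partition σ of [2dm] with σ ≤ π, every two-element block of π is also a block of σ (so σ restricted to A equals π restricted to A); and consequently (ii) the map σ ↦ σ|_{[2dm]∖A} is injective from {σ ∈ NC^{ε_d}(2dm) : σ ≤ π} into the set of even non-crossing partitions of the ordered set [2dm]∖A, whose cardinality is at most 4m. -/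
open Finset

namespace RIaux

variable {α : Type*}

/-- Number of adjacent sign changes of `f` along a list. -/
def chg (f : α → Bool) : List α → ℕ
  | [] => 0
  | [_] => 0
  | a :: b :: l => (if f a ≠ f b then 1 else 0) + chg f (b :: l)

@[simp] lemma chg_nil (f : α → Bool) : chg f [] = 0 := rfl

@[simp] lemma chg_single (f : α → Bool) (a : α) : chg f [a] = 0 := rfl

lemma chg_cons_cons (f : α → Bool) (a b : α) (l : List α) :
    chg f (a :: b :: l) = (if f a ≠ f b then 1 else 0) + chg f (b :: l) := rfl

lemma chg_le_cons (f : α → Bool) (a : α) (l : List α) : chg f l ≤ chg f (a :: l) := by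
  cases l with
  | nil => simp
  | cons b t => rw [chg_cons_cons]; exact Nat.le_add_left _ _

lemma chg_cons_le (f : α → Bool) (a : α) (l : List α) : chg f (a :: l) ≤ chg f l + 1 := by
  cases l with
  | nil => simp
  | cons b t =>
    rw [chg_cons_cons]
    have : (if f a ≠ f b then 1 else 0) ≤ 1 := by split <;> omega
    omega

lemma chg_append_le (f : α → Bool) : ∀ l₁ l₂ : List α, chg f l₁ + chg f l₂ ≤ chg f (l₁ ++ l₂)
  | [], l₂ => by simp
  | [a], l₂ => by simpa using chg_le_cons f a l₂
  | a :: b :: t, l₂ => by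
    have ih := chg_append_le f (b :: t) l₂
    simp only [List.cons_append, chg_cons_cons] at *
    omega

lemma chg_middle (f : α → Bool) : ∀ (u : List α) {v : List α} (w : List α), v ≠ [] →
    chg f (u ++ w) + chg f v ≤ chg f (u ++ v ++ w) + 1
  | [], v, w, _ => by
    simp only [List.nil_append]
    have := chg_append_le f v w
    omega
  | [a], v, w, hv => by
    obtain ⟨c, v', rfl⟩ := List.exists_cons_of_ne_nil hv
    have h1 : chg f (a :: w) ≤ chg f w + 1 := chg_cons_le f a w
    have h2 : chg f (c :: v') + chg f w ≤ chg f ((c :: v') ++ w) := chg_append_le f _ w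
    have h3 : chg f ((c :: v') ++ w) ≤ chg f (a :: ((c :: v') ++ w)) := chg_le_cons f a _
    simp only [List.cons_append, List.nil_append] at *
    omega
  | a :: b :: t, v, w, hv => by
    have ih := chg_middle f (b :: t) w hv (v := v)
    simp only [List.cons_append, chg_cons_cons, List.append_assoc] at *
    omega

lemma chg_alt (f : α → Bool) : ∀ l : List α, l ≠ [] → l.Chain' (fun a b => f a ≠ f b) →
    chg f l + 1 = l.length
  | [], h, _ => absurd rfl h
  | [_], _, _ => rfl
  | a :: b :: t, _, h => by
    unfold List.Chain' at h
    rw [List.isChain_cons_cons] at h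
    have ih := chg_alt f (b :: t) (by simp) h.2
    rw [chg_cons_cons, if_pos h.1]
    simp only [List.length_cons] at *
    omega

lemma chg_map {β : Type*} (f : α → Bool) (g : β → α) : ∀ l : List β,
    chg f (l.map g) = chg (fun b => f (g b)) l
  | [] => rfl
  | [_] => rfl
  | a :: b :: t => by
    have ih := chg_map f g (b :: t)
    simp only [List.map_cons] at *
    rw [chg_cons_cons, chg_cons_cons, ih]

lemma chg_append_singleton (f : α → Bool) : ∀ (l : List α) (hl : l ≠ []) (a : α),
    chg f (l ++ [a]) = chg f l + (if f (l.getLast hl) ≠ f a then 1 else 0)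
  | [b], _, a => by
    simp [chg_cons_cons, Nat.add_comm]
    by_cases h : f b = f a <;> simp [h]
  | b :: c :: t, _, a => by
    have ih := chg_append_singleton f (c :: t) (by simp) a
    simp only [List.cons_append, chg_cons_cons] at *
    rw [ih, List.getLast_cons (by simp : c :: t ≠ [])]
    omega


variable {N : ℕ}

lemma sort_union {X Y : Finset (Fin N)} (h : ∀ a ∈ X, ∀ b ∈ Y, a < b) :
    Finset.sort (X ∪ Y) (· ≤ ·) = Finset.sort X (· ≤ ·) ++ Finset.sort Y (· ≤ ·) := by
  have hd : Disjoint X Y := by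
    rw [Finset.disjoint_left]
    intro a haX haY
    exact absurd (h a haX a haY) (lt_irrefl a)
  have hperm : List.Perm (Finset.sort (X ∪ Y) (· ≤ ·)) (Finset.sort X (· ≤ ·) ++ Finset.sort Y (· ≤ ·)) := by
    rw [← Multiset.coe_eq_coe, ← Multiset.coe_add]
    rw [Finset.sort_eq, Finset.sort_eq, Finset.sort_eq]
    rw [← Finset.disjUnion_eq_union X Y hd]
    rfl
  have hsorted : (Finset.sort X (· ≤ ·) ++ Finset.sort Y (· ≤ ·)).Pairwise (· ≤ ·) := by
    refine List.pairwise_append.mpr ⟨Finset.pairwise_sort _ _, Finset.pairwise_sort _ _, ?_⟩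
    intro x hx y hy
    exact le_of_lt (h x ((Finset.mem_sort _).1 hx) y ((Finset.mem_sort _).1 hy))
  exact List.Perm.eq_of_pairwise' (Finset.pairwise_sort _ _) hsorted hperm

/-- same-block relation for a finite family of blocks -/
def SB (P : Finset (Finset (Fin N))) (s t : Fin N) : Prop := ∃ B ∈ P, s ∈ B ∧ t ∈ B

/-- The key counting lemma: a family of pairwise disjoint, nonempty, alternating,
non-crossing blocks covering `S` satisfies `#S + 1 ≤ 2·#P + chg (sort S)`. -/
lemma key (f : Fin N → Bool) :
    ∀ (n : ℕ) (S : Finset (Fin N)) (P : Finset (Finset (Fin N))),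
      S.card ≤ n →
      ((P : Set (Finset (Fin N))).PairwiseDisjoint id) →
      (∀ B ∈ P, B.Nonempty) →
      (∀ x : Fin N, x ∈ S ↔ ∃ B ∈ P, x ∈ B) →
      (∀ B ∈ P, (Finset.sort B (· ≤ ·)).Chain' (fun a b => f a ≠ f b)) →
      (∀ s₁ t₁ s₂ t₂ : Fin N, s₁ < t₁ → t₁ < s₂ → s₂ < t₂ →
        SB P s₁ s₂ → SB P t₁ t₂ → SB P s₁ t₁) →
      S.Nonempty →
      S.card + 1 ≤ 2 * P.card + chg f (Finset.sort S (· ≤ ·)) := by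
  intro n
  induction n with
  | zero =>
    intro S P hcard _ _ _ _ _ hS
    have := Finset.card_pos.mpr hS
    omega
  | succ n IH =>
    intro S P hcard hdisj hne hun halt hnc hS
    -- uniqueness of blocks
    have huniq : ∀ C D, C ∈ P → D ∈ P → ∀ y : Fin N, y ∈ C → y ∈ D → C = D := by
      intro C D hC hD y hyC hyD
      by_contra hne'
      exact (Finset.disjoint_left.mp (hdisj hC hD hne')) hyC hyD
    obtain ⟨x₀, hx₀⟩ := hS
    obtain ⟨B₀, hB₀, _⟩ := (hun x₀).1 hx₀
    have hPne : P.Nonempty := ⟨B₀, hB₀⟩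
    -- choose a block minimizing its span
    obtain ⟨B, hBP, hBmin⟩ := Finset.exists_min_image P
      (fun B => B.sup (fun y : Fin N => y.val + 1) + B.sup (fun y : Fin N => N - y.val)) hPne
    have hBne : B.Nonempty := hne B hBP
    set a := B.min' hBne with ha_def
    set b := B.max' hBne with hb_def
    have ha : a ∈ B := B.min'_mem hBne
    have hb : b ∈ B := B.max'_mem hBne
    -- B is contiguous in S
    have hcont : ∀ x ∈ S, a ≤ x → x ≤ b → x ∈ B := by
      intro x hxS hax hxb
      by_contra hxB
      obtain ⟨C, hCP, hxC⟩ := (hun x).1 hxS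
      have hCB : C ≠ B := fun h => hxB (h ▸ hxC)
      have hax' : a < x := lt_of_le_of_ne hax (fun h => hxB (h ▸ ha))
      have hxb' : x < b := lt_of_le_of_ne hxb (fun h => hxB (h ▸ hb))
      have hCin : ∀ y ∈ C, a < y ∧ y < b := by
        intro y hyC
        constructor
        · by_contra hya
          push_neg at hya
          have hya' : y < a :=
            lt_of_le_of_ne hya (fun h => hCB (huniq C B hCP hBP y hyC (h ▸ ha)))
          obtain ⟨D, hDP, hyD, haD⟩ :=
            hnc y a x b hya' hax' hxb' ⟨C, hCP, hyC, hxC⟩ ⟨B, hBP, ha, hb⟩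
          exact hCB ((huniq C D hCP hDP y hyC hyD).trans (huniq D B hDP hBP a haD ha))
        · by_contra hyb
          push_neg at hyb
          have hyb' : b < y :=
            lt_of_le_of_ne hyb (fun h => hCB (huniq C B hCP hBP y hyC (h.symm ▸ hb)))
          obtain ⟨D, hDP, haD, hxD⟩ :=
            hnc a x b y hax' hxb' hyb' ⟨B, hBP, ha, hb⟩ ⟨C, hCP, hxC, hyC⟩
          exact hCB ((huniq C D hCP hDP x hxC hxD).trans (huniq D B hDP hBP a haD ha))
      have hCne : C.Nonempty := ⟨x, hxC⟩
      have hlt : C.sup (fun y : Fin N => y.val + 1) + C.sup (fun y : Fin N => N - y.val)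
          < B.sup (fun y : Fin N => y.val + 1) + B.sup (fun y : Fin N => N - y.val) := by
        have h1 : C.sup (fun y : Fin N => y.val + 1) ≤ b.val := by
          apply Finset.sup_le
          intro y hy
          exact Nat.succ_le_of_lt (hCin y hy).2
        have h2 : C.sup (fun y : Fin N => N - y.val) ≤ N - a.val - 1 := by
          apply Finset.sup_le
          intro y hy
          have := (hCin y hy).1
          have h5 : a.val < y.val := this
          have h6 : y.val < N := y.isLt
          omega
        have h3 : b.val + 1 ≤ B.sup (fun y : Fin N => y.val + 1) := Finset.le_sup (f := fun y : Fin N => y.val + 1) hb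
        have h4 : N - a.val ≤ B.sup (fun y : Fin N => N - y.val) := Finset.le_sup (f := fun y : Fin N => N - y.val) ha
        have h7 : a.val < N := a.isLt
        omega
      exact absurd (hBmin C hCP) (not_le.mpr hlt)
    -- split S into L ∪ B ∪ R
    have hBS : B ⊆ S := fun y hy => (hun y).2 ⟨B, hBP, hy⟩
    set L := S.filter (fun y => y < a) with hL_def
    set R := S.filter (fun y => b < y) with hR_def
    have hLmem : ∀ y, y ∈ L ↔ y ∈ S ∧ y < a := by
      intro y; simp [hL_def, Finset.mem_filter]
    have hRmem : ∀ y, y ∈ R ↔ y ∈ S ∧ b < y := by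
      intro y; simp [hR_def, Finset.mem_filter]
    have hLB : ∀ y ∈ L, ∀ z ∈ B, y < z := fun y hy z hz =>
      lt_of_lt_of_le ((hLmem y).1 hy).2 (B.min'_le z hz)
    have hBR : ∀ y ∈ B, ∀ z ∈ R, y < z := fun y hy z hz =>
      lt_of_le_of_lt (B.le_max' y hy) ((hRmem z).1 hz).2
    have hLBR : ∀ y ∈ L, ∀ z ∈ B ∪ R, y < z := by
      intro y hy z hz
      rcases Finset.mem_union.1 hz with hz | hz
      · exact hLB y hy z hz
      · exact lt_trans (lt_of_lt_of_le ((hLmem y).1 hy).2 (B.min'_le b hb)) ((hRmem z).1 hz).2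
    have hLR : ∀ y ∈ L, ∀ z ∈ R, y < z := fun y hy z hz =>
      hLBR y hy z (Finset.mem_union_right _ hz)
    have hSplit : S = L ∪ (B ∪ R) := by
      ext y
      simp only [Finset.mem_union, hLmem, hRmem]
      constructor
      · intro hyS
        rcases lt_or_ge y a with h | h
        · exact Or.inl ⟨hyS, h⟩
        · rcases le_or_gt y b with h' | h'
          · exact Or.inr (Or.inl (hcont y hyS h h'))
          · exact Or.inr (Or.inr ⟨hyS, h'⟩)
      · rintro (⟨h, _⟩ | h | ⟨h, _⟩)
        · exact h
        · exact hBS h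
        · exact h
    set S' := L ∪ R with hS'_def
    have hS'mem : ∀ y, y ∈ S' ↔ y ∈ S ∧ y ∉ B := by
      intro y
      simp only [hS'_def, Finset.mem_union, hLmem, hRmem]
      constructor
      · rintro (⟨h, h'⟩ | ⟨h, h'⟩)
        · exact ⟨h, fun hyB => absurd (B.min'_le y hyB) (not_le.mpr h')⟩
        · exact ⟨h, fun hyB => absurd (B.le_max' y hyB) (not_le.mpr h')⟩
      · rintro ⟨h, h'⟩
        rcases lt_or_ge y a with hlt | hge
        · exact Or.inl ⟨h, hlt⟩
        · rcases le_or_gt y b with hle | hgt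
          · exact absurd (hcont y h hge hle) h'
          · exact Or.inr ⟨h, hgt⟩
    have hsortS : Finset.sort S (· ≤ ·)
        = Finset.sort L (· ≤ ·) ++ (Finset.sort B (· ≤ ·) ++ Finset.sort R (· ≤ ·)) := by
      rw [hSplit, sort_union hLBR, sort_union hBR]
    have hsortS' : Finset.sort S' (· ≤ ·) = Finset.sort L (· ≤ ·) ++ Finset.sort R (· ≤ ·) :=
      sort_union hLR
    -- chg facts
    have hsortBne : Finset.sort B (· ≤ ·) ≠ [] := by
      intro h
      have hlen := Finset.length_sort (α := Fin N) (· ≤ ·) (s := B)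
      rw [h] at hlen
      simp only [List.length_nil] at hlen
      have hpos := Finset.card_pos.mpr hBne
      omega
    have hchgB : chg f (Finset.sort B (· ≤ ·)) + 1 = B.card := by
      have := chg_alt f (Finset.sort B (· ≤ ·)) hsortBne (halt B hBP)
      rwa [Finset.length_sort] at this
    have hM := chg_middle f (Finset.sort L (· ≤ ·)) (Finset.sort R (· ≤ ·)) hsortBne
      (v := Finset.sort B (· ≤ ·))
    rw [List.append_assoc, ← hsortS, ← hsortS'] at hM
    -- cardinalities
    have hcardsplit : S'.card + B.card = S.card := by
      have hdisjLR : Disjoint L R := by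
        rw [Finset.disjoint_left]
        intro y hyL hyR
        exact absurd (hLR y hyL y hyR) (lt_irrefl y)
      have hdisjL : Disjoint L (B ∪ R) := by
        rw [Finset.disjoint_left]
        intro y hyL hyBR
        exact absurd (hLBR y hyL y hyBR) (lt_irrefl y)
      have hdisjBR : Disjoint B R := by
        rw [Finset.disjoint_left]
        intro y hyB hyR
        exact absurd (hBR y hyB y hyR) (lt_irrefl y)
      rw [hS'_def, Finset.card_union_of_disjoint hdisjLR, hSplit,
        Finset.card_union_of_disjoint hdisjL, Finset.card_union_of_disjoint hdisjBR]
      omega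
    have hBcard : 1 ≤ B.card := Finset.card_pos.mpr hBne
    rcases Finset.eq_empty_or_nonempty S' with hS'e | hS'ne
    · -- S = B
      have hSB : S = B := by
        apply Finset.Subset.antisymm _ hBS
        intro y hy
        by_contra hyB
        have : y ∈ S' := (hS'mem y).2 ⟨hy, hyB⟩
        rw [hS'e] at this
        exact absurd this (Finset.notMem_empty y)
      have hP1 : 1 ≤ P.card := Finset.card_pos.mpr hPne
      rw [hSB]
      omega
    · -- recurse
      set P' := P.erase B with hP'_def
      have hP'card : P'.card + 1 = P.card := by
        rw [hP'_def, Finset.card_erase_of_mem hBP]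
        have := Finset.card_pos.mpr hPne
        omega
      have hrec := IH S' P' ?_ ?_ ?_ ?_ ?_ ?_ hS'ne
      · omega
      · -- card bound
        have := hcardsplit
        omega
      · exact hdisj.subset (fun C hC => Finset.mem_of_mem_erase hC)
      · exact fun C hC => hne C (Finset.mem_of_mem_erase hC)
      · -- union
        intro y
        rw [hS'mem y]
        constructor
        · rintro ⟨hyS, hyB⟩
          obtain ⟨C, hCP, hyC⟩ := (hun y).1 hyS
          have : C ≠ B := fun h => hyB (h ▸ hyC)
          exact ⟨C, Finset.mem_erase.2 ⟨this, hCP⟩, hyC⟩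
        · rintro ⟨C, hCP', hyC⟩
          obtain ⟨hCB, hCP⟩ := Finset.mem_erase.1 hCP'
          refine ⟨(hun y).2 ⟨C, hCP, hyC⟩, fun hyB => ?_⟩
          exact hCB (huniq C B hCP hBP y hyC hyB)
      · exact fun C hC => halt C (Finset.mem_of_mem_erase hC)
      · -- non-crossing for P'
        intro s₁ t₁ s₂ t₂ h1 h2 h3 hs ht
        obtain ⟨C, hCP', hs₁C, hs₂C⟩ := hs
        obtain ⟨E, hEP', ht₁E, ht₂E⟩ := ht
        obtain ⟨D, hDP, hs₁D, ht₁D⟩ := hnc s₁ t₁ s₂ t₂ h1 h2 h3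
          ⟨C, Finset.mem_of_mem_erase hCP', hs₁C, hs₂C⟩
          ⟨E, Finset.mem_of_mem_erase hEP', ht₁E, ht₂E⟩
        have hDC : D = C := huniq D C hDP (Finset.mem_of_mem_erase hCP') s₁ hs₁D hs₁C
        exact ⟨C, hCP', hs₁C, hDC ▸ ht₁D⟩

lemma chg_range_le (f : ℕ → Bool) (d : ℕ) (hd : 1 ≤ d)
    (hf : ∀ i, 1 ≤ i → ¬ d ∣ i → f (i-1) = f i) :
    ∀ n, chg f (List.range n) ≤ (n - 1) / d := by
  intro n
  induction n with
  | zero => simp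
  | succ k ihk =>
    cases k with
    | zero => simp [List.range_succ]
    | succ j =>
      rw [List.range_succ]
      have hne : List.range (j+1) ≠ [] := by simp
      rw [chg_append_singleton f _ hne]
      have hlast : (List.range (j+1)).getLast hne = j := by
        have hrs : List.range (j+1) = List.range j ++ [j] := List.range_succ (n := j)
        rw [List.getLast_congr hne (by simp [hrs]) hrs]
        exact List.getLast_append_singleton _
      rw [hlast]
      have hsd := Nat.succ_div (a := j) (b := d)
      by_cases hdvd : d ∣ (j+1)
      · rw [if_pos hdvd] at hsd
        have hδ : (if f j ≠ f (j+1) then 1 else 0) ≤ 1 := by split <;> omega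
        simp only [Nat.add_sub_cancel] at *
        omega
      · rw [if_neg hdvd] at hsd
        have : f j = f (j+1) := by
          have := hf (j+1) (by omega) hdvd
          simpa using this
        rw [if_neg (by simp [this])]
        simp only [Nat.add_sub_cancel] at *
        omega

lemma chg_univ_le (d m : ℕ) (hd : 1 ≤ d) (hm : 1 ≤ m) :
    chg (epsd d m) (Finset.sort (univ : Finset (Fin (2*d*m))) (· ≤ ·)) + 1 ≤ 2*m := by
  rw [show Finset.sort (univ : Finset (Fin (2*d*m))) (· ≤ ·) = List.finRange (2*d*m) from Fin.sort_univ (2*d*m)]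
  have h1 : chg (epsd d m) (List.finRange (2*d*m))
      = chg (fun i : ℕ => decide (i / d % 2 = 0)) (List.range (2*d*m)) := by
    rw [← (show (List.finRange (2*d*m)).map Fin.val = List.range (2*d*m) from
      List.ext_getElem (by simp) (by simp)), chg_map]
    rfl
  have hf : ∀ i, 1 ≤ i → ¬ d ∣ i → (fun i : ℕ => decide (i / d % 2 = 0)) (i-1)
      = (fun i : ℕ => decide (i / d % 2 = 0)) i := by
    intro i hi hdvd
    obtain ⟨j, rfl⟩ : ∃ j, i = j + 1 := ⟨i - 1, by omega⟩
    have hsd := Nat.succ_div (a := j) (b := d)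
    rw [if_neg hdvd] at hsd
    simp only [Nat.add_sub_cancel]
    rw [hsd]
    simp
  have h2 := chg_range_le (fun i : ℕ => decide (i / d % 2 = 0)) d hd hf (2*d*m)
  have hdm : 1 * 1 ≤ d * m := Nat.mul_le_mul hd hm
  have hassoc : 2 * (d * m) = 2 * d * m := by ring
  have h3 : (2*d*m - 1) / d < 2*m := by
    rw [Nat.div_lt_iff_lt_mul (by omega : 0 < d)]
    have : 2 * m * d = 2 * d * m := by ring
    omega
  omega

end RIaux

/-- restriction-injectivity argument from the proof of
Lemma 3.6 of the paper: let `π` be a non-crossing `ε_d`-partition of `[2dm]`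
and `A` the union of its two-element blocks.  Then (i) every two-element block
of `π` is a block of every non-crossing `ε_d`-partition `σ ≤ π`; the complement
of `A` has at most `4m` elements; the blocks of such a `σ` lying in the
complement of `A` are even (and non-crossing, being blocks of `σ`); and (ii)
two such `σ`'s having the same restriction to the complement of `A` are equal. -/
theorem restriction_injective (d m : ℕ) (hd : 1 ≤ d) (hm : 1 ≤ m)
    (π : Finpartition (univ : Finset (Fin (2*d*m))))
    (hNC : NonCrossing π) (hπ : EpsPartition (epsd d m) π)
    (A : Finset (Fin (2*d*m)))
    (hA : A = (π.parts.filter fun B => B.card = 2).biUnion id) :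
    (∀ σ : Finpartition (univ : Finset (Fin (2*d*m))),
        NonCrossing σ → EpsPartition (epsd d m) σ → Refines σ π →
        ∀ B ∈ π.parts, B.card = 2 → B ∈ σ.parts) ∧
    ((univ \ A).card ≤ 4*m) ∧
    (∀ σ : Finpartition (univ : Finset (Fin (2*d*m))),
        NonCrossing σ → EpsPartition (epsd d m) σ → Refines σ π →
        ∀ B ∈ σ.parts, Disjoint B A → Even B.card) ∧
    (∀ σ₁ σ₂ : Finpartition (univ : Finset (Fin (2*d*m))),
        NonCrossing σ₁ → EpsPartition (epsd d m) σ₁ → Refines σ₁ π →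
        NonCrossing σ₂ → EpsPartition (epsd d m) σ₂ → Refines σ₂ π →
        (∀ B : Finset (Fin (2*d*m)), Disjoint B A →
            (B ∈ σ₁.parts ↔ B ∈ σ₂.parts)) →
        σ₁ = σ₂) := by

  have part1 : ∀ σ : Finpartition (univ : Finset (Fin (2*d*m))),
      NonCrossing σ → EpsPartition (epsd d m) σ → Refines σ π →
      ∀ B ∈ π.parts, B.card = 2 → B ∈ σ.parts := by
    intro σ _ hσeps hσref B hBπ hB2
    have hBne : B.Nonempty := Finset.card_pos.mp (by omega)
    obtain ⟨x, hxB⟩ := hBne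
    obtain ⟨C, hCσ, hxC⟩ := σ.exists_mem (Finset.mem_univ x)
    obtain ⟨D, hDπ, hCD⟩ := hσref C hCσ
    have hDB : D = B := π.eq_of_mem_parts hDπ hBπ (hCD hxC) hxB
    have hCB : C ⊆ B := hDB ▸ hCD
    have hCne : C.Nonempty := σ.nonempty_of_mem_parts hCσ
    obtain ⟨r, hr⟩ := hσeps.1 C hCσ
    have h1 : 1 ≤ C.card := Finset.card_pos.mpr hCne
    have hCBeq : C = B := Finset.eq_of_subset_of_card_le hCB (by omega)
    rwa [← hCBeq]
  refine ⟨part1, ?_, ?_, ?_⟩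
  · -- cardinality bound
    have hdm : 1 * 1 ≤ d * m := Nat.mul_le_mul hd hm
    have hassoc : 2 * (d * m) = 2 * d * m := by ring
    have huniv_ne : (univ : Finset (Fin (2*d*m))).Nonempty :=
      ⟨⟨0, by omega⟩, Finset.mem_univ _⟩
    have hkey := RIaux.key (epsd d m) (univ : Finset (Fin (2*d*m))).card univ π.parts
      le_rfl π.disjoint (fun B hB => π.nonempty_of_mem_parts hB)
      (fun x => ⟨fun _ => π.exists_mem (Finset.mem_univ x), fun _ => Finset.mem_univ x⟩)
      hπ.2 hNC huniv_ne
    have hchg := RIaux.chg_univ_le d m hd hm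
    have hcard : (univ : Finset (Fin (2*d*m))).card = 2*d*m := by simp
    have hsum := π.sum_card_parts
    have hsplitsum := Finset.sum_filter_add_sum_filter_not π.parts
      (fun B => B.card = 2) (fun B => B.card)
    have h2sum : ∑ B ∈ π.parts.filter (fun B => B.card = 2), B.card
        = 2 * (π.parts.filter (fun B => B.card = 2)).card := by
      rw [Finset.sum_congr rfl (fun B hB => (Finset.mem_filter.1 hB).2),
        Finset.sum_const, smul_eq_mul, mul_comm]
    have h4le : 4 * (π.parts.filter (fun B => ¬ B.card = 2)).card
        ≤ ∑ B ∈ π.parts.filter (fun B => ¬ B.card = 2), B.card := by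
      have := Finset.card_nsmul_le_sum (π.parts.filter (fun B => ¬ B.card = 2))
        (fun B => B.card) 4 ?_
      · rwa [smul_eq_mul, mul_comm] at this
      · intro B hB
        obtain ⟨hBπ, hB2⟩ := Finset.mem_filter.1 hB
        obtain ⟨r, hr⟩ := hπ.1 B hBπ
        have h1 : 1 ≤ B.card := Finset.card_pos.mpr (π.nonempty_of_mem_parts hBπ)
        show 4 ≤ B.card
        omega
    have hfilters := Finset.card_filter_add_card_filter_not
      (s := π.parts) (p := fun B => B.card = 2)
    have hAcard : A.card = ∑ B ∈ π.parts.filter (fun B => B.card = 2), B.card := by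
      rw [hA]
      rw [Finset.card_biUnion]
      · simp only [id]
      · intro x hx y hy hxy
        exact π.disjoint (Finset.mem_coe.2 (Finset.mem_filter.1 hx).1)
          (Finset.mem_coe.2 (Finset.mem_filter.1 hy).1) hxy
    have hsd : (univ \ A).card = (univ : Finset (Fin (2*d*m))).card - A.card :=
      Finset.card_sdiff_of_subset (Finset.subset_univ A)
    omega
  · intro σ _ hσeps _ B hB _
    exact hσeps.1 B hB
  · intro σ₁ σ₂ h₁NC h₁eps h₁ref h₂NC h₂eps h₂ref hagree
    have step : ∀ σ σ' : Finpartition (univ : Finset (Fin (2*d*m))),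
        NonCrossing σ → EpsPartition (epsd d m) σ → Refines σ π →
        NonCrossing σ' → EpsPartition (epsd d m) σ' → Refines σ' π →
        (∀ B : Finset (Fin (2*d*m)), Disjoint B A → (B ∈ σ.parts ↔ B ∈ σ'.parts)) →
        σ.parts ⊆ σ'.parts := by
      intro σ σ' hσNC hσeps hσref hσ'NC hσ'eps hσ'ref hag B hB
      by_cases hdis : Disjoint B A
      · exact (hag B hdis).1 hB
      · rw [Finset.not_disjoint_iff] at hdis
        obtain ⟨x, hxB, hxA⟩ := hdis
        rw [hA, Finset.mem_biUnion] at hxA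
        obtain ⟨C, hCt, hxC⟩ := hxA
        obtain ⟨hCπ, hC2⟩ := Finset.mem_filter.1 hCt
        have hCσ : C ∈ σ.parts := part1 σ hσNC hσeps hσref C hCπ hC2
        have hBC : B = C := σ.eq_of_mem_parts hB hCσ hxB hxC
        rw [hBC]
        exact part1 σ' hσ'NC hσ'eps hσ'ref C hCπ hC2
    have h12 := step σ₁ σ₂ h₁NC h₁eps h₁ref h₂NC h₂eps h₂ref hagree
    have h21 := step σ₂ σ₁ h₂NC h₂eps h₂ref h₁NC h₁eps h₁ref
      (fun B hB => (hagree B hB).symm)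
    apply Finpartition.ext
    exact Finset.Subset.antisymm h12 h21
end
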